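/- Let Y be a subspace of X and let f ∈ X*. Then there exists ρ ∈ 𝒫 such that d_{χ_ρ}(f, Y^⊥) = χ_ρ^Y(f|_Y) < ∞, where f|_Y denotes the restriction of f to Y. -/
import Mathlib


open scoped ENNReal

noncomputable section

/-- `χ_ρ(g) = sup { |g v| : ρ v ≤ 1 } ∈ [0,∞]`. -/
def chi {V : Type*} [AddCommGroup V] [Module ℝ V] [TopologicalSpace V]
    (ρ : V → ℝ) (g : V →L[ℝ] ℝ) : ℝ≥0∞ :=
  ⨆ v ∈ {v : V | ρ v ≤ 1}, ENNReal.ofReal |g v|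

/-- `χ_ρ^W(f)` for a functional `f` on a subspace `W`. -/
def chiSub {V : Type*} [AddCommGroup V] [Module ℝ V] [TopologicalSpace V]
    (W : Submodule ℝ V) (ρ : V → ℝ) (f : W →L[ℝ] ℝ) : ℝ≥0∞ :=
  chi (fun w : W => ρ (w : V)) f

/-- The annihilator `W^⊥ = {g ∈ V* : g|_W = 0}`. -/
def ann {V : Type*} [AddCommGroup V] [Module ℝ V] [TopologicalSpace V]
    (W : Submodule ℝ V) : Set (V →L[ℝ] ℝ) :=
  {g | ∀ y ∈ W, g y = 0}

/-- `d_{χ_ρ}(f, S) = inf {χ_ρ(f - s) : s ∈ S}`. -/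
def distChi {V : Type*} [AddCommGroup V] [Module ℝ V] [TopologicalSpace V]
    (ρ : V → ℝ) (f : V →L[ℝ] ℝ) (S : Set (V →L[ℝ] ℝ)) : ℝ≥0∞ :=
  ⨅ s ∈ S, chi ρ (f - s)

lemma chi_le_ofReal {V : Type*} [AddCommGroup V] [Module ℝ V] [TopologicalSpace V]
    {ρ : V → ℝ} {g : V →L[ℝ] ℝ} {M : ℝ} (h : ∀ v, ρ v ≤ 1 → |g v| ≤ M) :
    chi ρ g ≤ ENNReal.ofReal M :=
  iSup₂_le fun v hv => ENNReal.ofReal_le_ofReal (h v hv)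

lemma ofReal_le_chi {V : Type*} [AddCommGroup V] [Module ℝ V] [TopologicalSpace V]
    {ρ : V → ℝ} {g : V →L[ℝ] ℝ} {v : V} (hv : ρ v ≤ 1) :
    ENNReal.ofReal |g v| ≤ chi ρ g :=
  le_iSup₂ (f := fun v (_ : v ∈ {v : V | ρ v ≤ 1}) => ENNReal.ofReal |g v|) v hv

theorem statement3 {X : Type*} [AddCommGroup X] [Module ℝ X] [TopologicalSpace X]
    {ι : Type*} [Nonempty ι] (p : SeminormFamily ℝ X ι) (hp : WithSeminorms p)
    (hdir : Directed (· ≤ ·) p) (Y : Submodule ℝ X) (f : X →L[ℝ] ℝ) :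
    ∃ i : ι, distChi (⇑(p i)) f (ann Y) = chiSub Y (⇑(p i)) (f.comp Y.subtypeL) ∧
      chiSub Y (⇑(p i)) (f.comp Y.subtypeL) < ⊤ := by
  classical
  -- get a seminorm bound for `f`
  have hq : Continuous fun x => ‖f x‖ := f.continuous.norm
  obtain ⟨s, C, -, hC⟩ := Seminorm.bound_of_continuous hp
    ((normSeminorm ℝ ℝ).comp f.toLinearMap) hq
  obtain ⟨i, hi⟩ := hdir.finset_le s
  have hsup : s.sup p ≤ p i := Finset.sup_le hi
  have hfb : ∀ x, |f x| ≤ (C : ℝ) * p i x := by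
    intro x
    have h1 : ((normSeminorm ℝ ℝ).comp f.toLinearMap) x ≤ (C • s.sup p) x := hC x
    have h2 : (C : ℝ) * (s.sup p) x ≤ (C : ℝ) * p i x :=
      mul_le_mul_of_nonneg_left (hsup x) C.coe_nonneg
    simpa using h1.trans h2
  refine ⟨i, ?_⟩
  set fY := f.comp Y.subtypeL with hfY
  -- finiteness
  have hfin : chiSub Y (⇑(p i)) fY ≤ ENNReal.ofReal C := by
    refine chi_le_ofReal fun v hv => ?_
    calc |fY v| ≤ (C : ℝ) * p i (v : X) := hfb v
    _ ≤ (C : ℝ) * 1 := mul_le_mul_of_nonneg_left hv C.coe_nonneg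
    _ = C := mul_one _
  have hne : chiSub Y (⇑(p i)) fY ≠ ⊤ := (hfin.trans_lt ENNReal.ofReal_lt_top).ne
  set M : ℝ := (chiSub Y (⇑(p i)) fY).toReal with hM
  have hM0 : 0 ≤ M := ENNReal.toReal_nonneg
  -- bound on Y : |f y| ≤ M * p i y
  have hball : ∀ y : Y, p i (y : X) ≤ 1 → |fY y| ≤ M := by
    intro y hy
    have := ofReal_le_chi (ρ := fun w : Y => p i (w : X)) (g := fY) hy
    have h2 : ENNReal.ofReal |fY y| ≤ chiSub Y (⇑(p i)) fY := this
    have := ENNReal.toReal_mono hne h2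
    rwa [ENNReal.toReal_ofReal (abs_nonneg _)] at this
  have hYb : ∀ y : Y, |fY y| ≤ M * p i (y : X) := by
    intro y
    rcases lt_or_eq_of_le (apply_nonneg (p i) (y : X)) with hpos | hzero
    · have h1 : p i (((p i (y : X))⁻¹ • y : Y) : X) ≤ 1 := by
        rw [Submodule.coe_smul, map_smul_eq_mul, Real.norm_eq_abs,
          abs_of_nonneg (inv_nonneg.mpr hpos.le), inv_mul_cancel₀ hpos.ne']
      have h2 := hball _ h1
      rw [map_smul, smul_eq_mul, abs_mul, abs_of_nonneg (inv_nonneg.mpr hpos.le)] at h2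
      calc |fY y| = p i (y : X) * ((p i (y : X))⁻¹ * |fY y|) := by
            field_simp
      _ ≤ p i (y : X) * M := mul_le_mul_of_nonneg_left h2 hpos.le
      _ = M * p i (y : X) := mul_comm _ _
    · -- p i y = 0 : then fY y = 0
      have hzero' : p i (y : X) = 0 := hzero.symm
      have hz : fY y = 0 := by
        by_contra hne0
        obtain ⟨t, ht⟩ := exists_nat_gt (M / |fY y|)
        have htpos : (0:ℝ) < t + 1 := by positivity
        have h1 : p i (((t + 1 : ℝ) • y : Y) : X) ≤ 1 := by
          rw [Submodule.coe_smul, map_smul_eq_mul, hzero', mul_zero]; norm_num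
        have h2 := hball _ h1
        rw [map_smul, smul_eq_mul, abs_mul, abs_of_nonneg htpos.le] at h2
        have habs : 0 < |fY y| := abs_pos.mpr hne0
        have h3 : (t + 1 : ℝ) ≤ M / |fY y| := (le_div_iff₀ habs).mpr h2
        linarith
      rw [hz, abs_zero, hzero', mul_zero]
  -- Hahn-Banach extension with bound M * p i
  obtain ⟨g, hg_eq, hg_le⟩ := exists_extension_of_le_sublinear
    ⟨Y, fY.toLinearMap⟩ (fun x => M * p i x)
    (fun c hc x => by
      show M * p i (c • x) = c * (M * p i x)
      rw [map_smul_eq_mul, Real.norm_eq_abs, abs_of_nonneg hc.le]; ring)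
    (fun x y => by
      show M * p i (x + y) ≤ M * p i x + M * p i y
      have := map_add_le_add (p i) x y
      nlinarith [apply_nonneg (p i) x, apply_nonneg (p i) y])
    (fun y => (le_abs_self _).trans (hYb y))
  have hg_abs : ∀ x, |g x| ≤ M * p i x := by
    intro x
    rcases abs_cases (g x) with ⟨h1, -⟩ | ⟨h1, -⟩
    · rw [h1]; exact hg_le x
    · rw [h1]
      have := hg_le (-x)
      rw [map_neg] at this
      simpa using this
  have hg_cont : Continuous g := by
    refine Seminorm.cont_withSeminorms_normedSpace ℝ hp g ⟨{i}, M.toNNReal, fun x => ?_⟩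
    simp only [Seminorm.comp_apply, Finset.sup_singleton, Seminorm.smul_apply,
      NNReal.smul_def, smul_eq_mul]
    calc ‖g x‖ = |g x| := rfl
    _ ≤ M * p i x := hg_abs x
    _ ≤ M.toNNReal * p i x :=
        mul_le_mul_of_nonneg_right (Real.le_coe_toNNReal M) (apply_nonneg _ _)
  set G : X →L[ℝ] ℝ := ⟨g, hg_cont⟩ with hG
  have hGann : f - G ∈ ann Y := by
    intro y hy
    have h : g y = f y := by simpa [fY] using hg_eq ⟨y, hy⟩
    show f y - g y = 0
    rw [h, sub_self]
  constructor
  · apply le_antisymm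
    · -- distChi ≤ chiSub : witness s = f - G
      have h1 : distChi (⇑(p i)) f (ann Y) ≤ chi (⇑(p i)) (f - (f - G)) :=
        biInf_le (f := fun s => chi (⇑(p i)) (f - s)) hGann
      have h2 : chi (⇑(p i)) (f - (f - G)) ≤ ENNReal.ofReal M := by
        refine chi_le_ofReal fun v hv => ?_
        have : (f - (f - G)) v = g v := by simp [hG]
        rw [this]
        exact (hg_abs v).trans (by nlinarith [apply_nonneg (p i) v])
      rw [hM, ENNReal.ofReal_toReal hne] at h2
      exact h1.trans h2
    · -- chiSub ≤ distChi
      refine le_iInf₂ fun t ht => ?_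
      refine iSup₂_le fun y hy => ?_
      have hft : (f - t) (y : X) = fY y := by
        have := ht (y : X) y.2
        simp only [ContinuousLinearMap.sub_apply, this, sub_zero]
        simp [fY]
      calc ENNReal.ofReal |fY y| = ENNReal.ofReal |(f - t) (y : X)| := by rw [hft]
      _ ≤ chi (⇑(p i)) (f - t) := ofReal_le_chi hy
  · exact hfin.trans_lt ENNReal.ofReal_lt_top
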